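/- For any set A ⊆ ℕ, the limit as c → ∞ of the lower f-window density with f(k) = ck equals the lower Pólya density: lim_{c→∞} δ_{f(k)=ck}(A) = d̲_P(A). -/

import Mathlib

open Filter

/-- `|A ∩ [m, m+k-1]|` -/
noncomputable def cnt (A : Set ℕ) (m k : ℕ) : ℕ := (A ∩ Set.Ico m (m + k)).ncard

/-- The lower `f`-window density of `A ⊆ ℕ`, for `f : ℕ → ℕ ∪ {∞}`:
`liminf_{k → ∞} min_{1 ≤ m ≤ f(k)} |A ∩ [m, m+k-1]| / k`. -/
noncomputable def windowDensity (f : ℕ → ℕ∞) (A : Set ℕ) : ℝ :=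
  Filter.atTop.liminf fun k : ℕ =>
    sInf {x : ℝ | ∃ m : ℕ, 1 ≤ m ∧ (m : ℕ∞) ≤ f k ∧ x = (cnt A m k : ℝ) / k}

/-- The inner quantity of the lower Pólya density:
`liminf_{n→∞} |A ∩ [θn, n]| / ((1-θ) n)`. -/
noncomputable def polyaInner (A : Set ℕ) (θ : ℝ) : ℝ :=
  Filter.atTop.liminf fun n : ℕ =>
    ((A ∩ {i : ℕ | θ * n ≤ (i : ℝ) ∧ i ≤ n}).ncard : ℝ) / ((1 - θ) * n)

namespace PolyaAux

/-- real count of `A` on `(a, b]`. -/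
noncomputable def P (A : Set ℕ) (a b : ℕ) : ℝ := ((A ∩ Set.Ioc a b).ncard : ℝ)

lemma P_nonneg (A : Set ℕ) (a b : ℕ) : 0 ≤ P A a b := Nat.cast_nonneg _

lemma fin_Ioc (A : Set ℕ) (a b : ℕ) : (A ∩ Set.Ioc a b).Finite :=
  (Set.finite_Ioc a b).subset Set.inter_subset_right

lemma fin_Ico (A : Set ℕ) (a b : ℕ) : (A ∩ Set.Ico a b).Finite :=
  (Set.finite_Ico a b).subset Set.inter_subset_right

lemma P_le (A : Set ℕ) {a b : ℕ} (hab : a ≤ b) : P A a b ≤ (b : ℝ) - a := by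
  have h1 : (A ∩ Set.Ioc a b).ncard ≤ (Set.Ioc a b).ncard :=
    Set.ncard_le_ncard Set.inter_subset_right (Set.finite_Ioc a b)
  have h2 : (Set.Ioc a b).ncard = b - a := by
    rw [← Finset.coe_Ioc, Set.ncard_coe_finset, Nat.card_Ioc]
  rw [P]
  have := h1.trans_eq h2
  have hcast : ((b - a : ℕ) : ℝ) ≤ (b : ℝ) - a := by
    rw [Nat.cast_sub hab]
  calc ((A ∩ Set.Ioc a b).ncard : ℝ) ≤ ((b - a : ℕ) : ℝ) := by exact_mod_cast this
    _ ≤ (b : ℝ) - a := hcast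

lemma P_add (A : Set ℕ) {a b c : ℕ} (hab : a ≤ b) (hbc : b ≤ c) :
    P A a c = P A a b + P A b c := by
  unfold P
  rw [← Nat.cast_add]
  congr 1
  rw [← Set.Ioc_union_Ioc_eq_Ioc hab hbc, Set.inter_union_distrib_left]
  exact Set.ncard_union_eq
    (Set.disjoint_left.2 (by rintro x ⟨-, -, h1⟩ ⟨-, h2, -⟩; exact absurd h1 (not_le.2 h2)))
    (fin_Ioc A a b) (fin_Ioc A b c)

lemma P_mono_left (A : Set ℕ) {a a' b : ℕ} (h : a ≤ a') : P A a' b ≤ P A a b := by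
  unfold P
  exact_mod_cast Set.ncard_le_ncard
    (Set.inter_subset_inter_right _ (Set.Ioc_subset_Ioc_left h)) (fin_Ioc A a b)

lemma cnt_eq_P (A : Set ℕ) {m : ℕ} (k : ℕ) (hm : 1 ≤ m) :
    (cnt A m k : ℝ) = P A (m - 1) (m - 1 + k) := by
  unfold cnt P
  congr 3
  ext i
  simp only [Set.mem_Ico, Set.mem_Ioc]
  omega

lemma cnt_le (A : Set ℕ) (m k : ℕ) : cnt A m k ≤ k := by
  have h1 : (A ∩ Set.Ico m (m + k)).ncard ≤ (Set.Ico m (m + k)).ncard :=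
    Set.ncard_le_ncard Set.inter_subset_right (Set.finite_Ico _ _)
  have h2 : (Set.Ico m (m + k)).ncard = k := by
    rw [← Finset.coe_Ico, Set.ncard_coe_finset, Nat.card_Ico]; omega
  exact h1.trans_eq h2

/-- the Pólya window at `n` is the integer interval `(⌈θn⌉-1, n]`. -/
lemma window_eq (A : Set ℕ) {θ : ℝ} (hθ0 : 0 < θ) {n : ℕ} (hn : 1 ≤ n) :
    (A ∩ {i : ℕ | θ * n ≤ (i : ℝ) ∧ i ≤ n}) = A ∩ Set.Ioc (⌈θ * n⌉₊ - 1) n := by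
  have hpos : 0 < ⌈θ * (n : ℝ)⌉₊ := Nat.ceil_pos.2 (by positivity)
  congr 1
  ext i
  simp only [Set.mem_setOf_eq, Set.mem_Ioc]
  constructor
  · rintro ⟨h1, h2⟩
    have : ⌈θ * (n : ℝ)⌉₊ ≤ i := Nat.ceil_le.2 h1
    omega
  · rintro ⟨h1, h2⟩
    have : ⌈θ * (n : ℝ)⌉₊ ≤ i := by omega
    exact ⟨Nat.ceil_le.1 this, h2⟩

end PolyaAux

namespace PolyaAux

/-- The set of window densities at scale `k` with window start `≤ c k`. -/
def S (A : Set ℕ) (c k : ℕ) : Set ℝ :=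
  {x : ℝ | ∃ m : ℕ, 1 ≤ m ∧ (m : ℕ∞) ≤ ((c * k : ℕ) : ℕ∞) ∧ x = (cnt A m k : ℝ) / k}

lemma mem_S_iff (A : Set ℕ) (c k : ℕ) (x : ℝ) :
    x ∈ S A c k ↔ ∃ m : ℕ, 1 ≤ m ∧ m ≤ c * k ∧ x = (cnt A m k : ℝ) / k := by
  unfold S
  constructor
  · rintro ⟨m, h1, h2, h3⟩; exact ⟨m, h1, by exact_mod_cast h2, h3⟩
  · rintro ⟨m, h1, h2, h3⟩; exact ⟨m, h1, by exact_mod_cast h2, h3⟩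

noncomputable def h (A : Set ℕ) (c k : ℕ) : ℝ := sInf (S A c k)

lemma windowDensity_eq (A : Set ℕ) (c : ℕ) :
    windowDensity (fun k => ((c * k : ℕ) : ℕ∞)) A = Filter.atTop.liminf (h A c) := rfl

lemma S_nonneg (A : Set ℕ) (c k : ℕ) {x : ℝ} (hx : x ∈ S A c k) : 0 ≤ x := by
  obtain ⟨m, -, -, rfl⟩ := (mem_S_iff A c k x).1 hx
  positivity

lemma S_bddBelow (A : Set ℕ) (c k : ℕ) : BddBelow (S A c k) :=
  ⟨0, fun x hx => S_nonneg A c k hx⟩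

lemma h_nonneg (A : Set ℕ) (c k : ℕ) : 0 ≤ h A c k :=
  Real.sInf_nonneg fun _ hx => S_nonneg A c k hx

lemma mem_S_one (A : Set ℕ) {c k : ℕ} (hc : 1 ≤ c) (hk : 1 ≤ k) :
    ((cnt A 1 k : ℝ) / k) ∈ S A c k :=
  (mem_S_iff A c k _).2 ⟨1, le_refl 1, Nat.one_le_iff_ne_zero.2 (by positivity), rfl⟩

lemma S_nonempty (A : Set ℕ) {c k : ℕ} (hc : 1 ≤ c) (hk : 1 ≤ k) : (S A c k).Nonempty :=
  ⟨_, mem_S_one A hc hk⟩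

lemma S_le_one (A : Set ℕ) (c k : ℕ) {x : ℝ} (hx : x ∈ S A c k) : x ≤ 1 := by
  obtain ⟨m, -, -, rfl⟩ := (mem_S_iff A c k x).1 hx
  rcases Nat.eq_zero_or_pos k with hk | hk
  · simp [hk]
  · rw [div_le_one (by exact_mod_cast hk)]
    exact_mod_cast cnt_le A m k

lemma h_le_one (A : Set ℕ) {c k : ℕ} (hc : 1 ≤ c) (hk : 1 ≤ k) : h A c k ≤ 1 :=
  csInf_le_of_le (S_bddBelow A c k) (mem_S_one A hc hk) (S_le_one A c k (mem_S_one A hc hk))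

lemma h_anti (A : Set ℕ) {c c' k : ℕ} (hc : 1 ≤ c) (hcc : c ≤ c') (hk : 1 ≤ k) :
    h A c' k ≤ h A c k := by
  apply csInf_le_csInf (S_bddBelow A c' k) (S_nonempty A hc hk)
  intro x hx
  obtain ⟨m, h1, h2, rfl⟩ := (mem_S_iff A c k x).1 hx
  exact (mem_S_iff A c' k _).2 ⟨m, h1, h2.trans (Nat.mul_le_mul_right k hcc), rfl⟩

lemma hb_ge (A : Set ℕ) (c : ℕ) : Filter.atTop.IsBoundedUnder (· ≥ ·) (h A c) :=
  Filter.isBoundedUnder_of ⟨0, fun k => h_nonneg A c k⟩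

lemma hb_le (A : Set ℕ) {c : ℕ} (hc : 1 ≤ c) : Filter.atTop.IsBoundedUnder (· ≤ ·) (h A c) :=
  ⟨1, Filter.eventually_map.2 (Filter.eventually_atTop.2 ⟨1, fun k hk => h_le_one A hc hk⟩)⟩

lemma hcob_ge (A : Set ℕ) {c : ℕ} (hc : 1 ≤ c) : Filter.atTop.IsCoboundedUnder (· ≥ ·) (h A c) :=
  (hb_le A hc).isCoboundedUnder_ge

noncomputable def g (A : Set ℕ) (c : ℕ) : ℝ := Filter.atTop.liminf (h A c)

lemma g_nonneg (A : Set ℕ) {c : ℕ} (hc : 1 ≤ c) : 0 ≤ g A c :=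
  Filter.le_liminf_of_le (hcob_ge A hc) (Filter.Eventually.of_forall fun k : ℕ => h_nonneg A c k)

lemma g_le_one (A : Set ℕ) {c : ℕ} (hc : 1 ≤ c) : g A c ≤ 1 :=
  Filter.liminf_le_of_frequently_le
    ((Filter.eventually_atTop.2 ⟨1, fun k hk => h_le_one A hc hk⟩).frequently) (hb_ge A c)

lemma g_anti (A : Set ℕ) {c c' : ℕ} (hc : 1 ≤ c) (hcc : c ≤ c') : g A c' ≤ g A c :=
  Filter.liminf_le_liminf
    (Filter.eventually_atTop.2 ⟨1, fun k hk => h_anti A hc hcc hk⟩)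
    (hb_ge A c') (hcob_ge A hc)

end PolyaAux

namespace PolyaAux

noncomputable def v (A : Set ℕ) (θ : ℝ) (n : ℕ) : ℝ :=
  ((A ∩ {i : ℕ | θ * n ≤ (i : ℝ) ∧ i ≤ n}).ncard : ℝ) / ((1 - θ) * n)

lemma polyaInner_eq (A : Set ℕ) (θ : ℝ) : polyaInner A θ = Filter.atTop.liminf (v A θ) := rfl

lemma ceil_le_self {θ : ℝ} (hθ1 : θ ≤ 1) (n : ℕ) : ⌈θ * n⌉₊ ≤ n :=
  Nat.ceil_le.2 (by nlinarith [Nat.cast_nonneg (α := ℝ) n])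

lemma window_count (A : Set ℕ) {θ : ℝ} (hθ0 : 0 < θ) (hθ1 : θ ≤ 1) {n : ℕ} (hn : 1 ≤ n) :
    (A ∩ {i : ℕ | θ * n ≤ (i : ℝ) ∧ i ≤ n}).ncard = cnt A ⌈θ * n⌉₊ (n + 1 - ⌈θ * n⌉₊) := by
  have hm1 : 1 ≤ ⌈θ * (n : ℝ)⌉₊ := Nat.ceil_pos.2 (by positivity)
  have hmn : ⌈θ * (n : ℝ)⌉₊ ≤ n := ceil_le_self hθ1 n
  rw [window_eq A hθ0 hn]
  unfold cnt
  have : Set.Ioc (⌈θ * (n:ℝ)⌉₊ - 1) n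
      = Set.Ico ⌈θ * (n:ℝ)⌉₊ (⌈θ * (n:ℝ)⌉₊ + (n + 1 - ⌈θ * (n:ℝ)⌉₊)) := by
    ext i
    simp only [Set.mem_Ioc, Set.mem_Ico]
    omega
  rw [this]

lemma kk_ge (θ : ℝ) (n : ℕ) (hθ0 : 0 ≤ θ) (hθ1 : θ ≤ 1) :
    (1 - θ) * n ≤ ((n + 1 - ⌈θ * n⌉₊ : ℕ) : ℝ) := by
  have h1 : ⌈θ * (n : ℝ)⌉₊ ≤ n + 1 := (ceil_le_self hθ1 n).trans (by omega)
  rw [Nat.cast_sub h1]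
  have h2 : (⌈θ * (n : ℝ)⌉₊ : ℝ) < θ * n + 1 :=
    Nat.ceil_lt_add_one (mul_nonneg hθ0 (Nat.cast_nonneg n))
  push_cast
  linarith

lemma v_le_two (A : Set ℕ) {θ : ℝ} (hθ0 : 0 < θ) (hθ1 : θ < 1) {n : ℕ}
    (h1n : 1 ≤ (1 - θ) * n) : v A θ n ≤ 2 := by
  have hn : 1 ≤ n := by
    rcases Nat.eq_zero_or_pos n with rfl | hp
    · norm_num at h1n
    · exact hp
  have hden : (0:ℝ) < (1 - θ) * n := by linarith
  rw [v, window_count A hθ0 hθ1.le hn, div_le_iff₀ hden]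
  have hub : (cnt A ⌈θ * n⌉₊ (n + 1 - ⌈θ * n⌉₊) : ℝ) ≤ ((n + 1 - ⌈θ * n⌉₊ : ℕ) : ℝ) := by
    exact_mod_cast cnt_le A _ _
  have h2 : ((n + 1 - ⌈θ * n⌉₊ : ℕ) : ℝ) ≤ (1 - θ) * n + 1 := by
    have h1 : ⌈θ * (n : ℝ)⌉₊ ≤ n + 1 := (ceil_le_self hθ1.le n).trans (by omega)
    rw [Nat.cast_sub h1]
    have := Nat.le_ceil (θ * (n : ℝ))
    push_cast
    linarith
  linarith

lemma v_nonneg (A : Set ℕ) {θ : ℝ} (hθ1 : θ ≤ 1) (n : ℕ) : 0 ≤ v A θ n := by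
  apply div_nonneg (Nat.cast_nonneg _)
  have : (0:ℝ) ≤ (n:ℝ) := Nat.cast_nonneg _
  nlinarith

lemma vcob_ge (A : Set ℕ) {θ : ℝ} (hθ0 : 0 < θ) (hθ1 : θ < 1) :
    Filter.atTop.IsCoboundedUnder (· ≥ ·) (v A θ) := by
  apply Filter.isCoboundedUnder_ge_of_eventually_le Filter.atTop (x := 2)
  have ht : Filter.Tendsto (fun n : ℕ => (1 - θ) * n) Filter.atTop Filter.atTop :=
    (tendsto_natCast_atTop_atTop).const_mul_atTop (by linarith)
  filter_upwards [ht.eventually_ge_atTop 1] with n hn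
  exact v_le_two A hθ0 hθ1 hn

lemma polya_ge (A : Set ℕ) {θ : ℝ} (hθh : 1/2 ≤ θ) (hθ1 : θ < 1) {c : ℕ} (hc : 1 ≤ c)
    (hcθ : 2 ≤ (c : ℝ) * (1 - θ)) : g A c ≤ polyaInner A θ := by
  have hθ0 : (0:ℝ) < θ := by linarith
  by_contra hlt
  push_neg at hlt
  obtain ⟨b, hb1, hb2⟩ := exists_between hlt
  have hev : ∀ᶠ k in Filter.atTop, b < h A c k :=
    Filter.eventually_lt_of_lt_liminf hb2 (hb_ge A c)
  obtain ⟨K, hK⟩ := Filter.eventually_atTop.1 hev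
  have ht : Filter.Tendsto (fun n : ℕ => (1 - θ) * n) Filter.atTop Filter.atTop :=
    (tendsto_natCast_atTop_atTop).const_mul_atTop (by linarith)
  have hev2 : ∀ᶠ n in Filter.atTop, b ≤ v A θ n := by
    filter_upwards [ht.eventually_ge_atTop (K : ℝ), Filter.eventually_ge_atTop 1] with n hKn hn
    set m := ⌈θ * (n : ℝ)⌉₊ with hm
    set kk := n + 1 - m with hkk
    have hm1 : 1 ≤ m := Nat.ceil_pos.2 (by positivity)
    have hmn : m ≤ n := ceil_le_self hθ1.le n
    have hkkR : (1 - θ) * n ≤ (kk : ℝ) := kk_ge θ n hθ0.le hθ1.le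
    have hkkK : K ≤ kk := by exact_mod_cast hKn.trans hkkR
    have hden : (0:ℝ) < (1 - θ) * n := by
      have : (1:ℝ) ≤ n := by exact_mod_cast hn
      nlinarith
    have hmck : m ≤ c * kk := by
      have h1 : (m : ℝ) < θ * n + 1 := Nat.ceil_lt_add_one (by positivity)
      have h2 : ((c * kk : ℕ) : ℝ) = (c : ℝ) * kk := by push_cast; ring
      have h3 : (c : ℝ) * kk ≥ (c : ℝ) * ((1 - θ) * n) :=
        mul_le_mul_of_nonneg_left hkkR (Nat.cast_nonneg _)
      have hn' : (1:ℝ) ≤ (n:ℝ) := by exact_mod_cast hn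
      have : (m : ℝ) ≤ ((c * kk : ℕ) : ℝ) := by rw [h2]; nlinarith
      exact_mod_cast this
    have hmem : (cnt A m kk : ℝ) / kk ∈ S A c kk :=
      (mem_S_iff A c kk _).2 ⟨m, hm1, hmck, rfl⟩
    have h1 : h A c kk ≤ (cnt A m kk : ℝ) / kk := csInf_le (S_bddBelow A c kk) hmem
    have h2 : (cnt A m kk : ℝ) / kk ≤ v A θ n := by
      rw [v, window_count A hθ0 hθ1.le hn]
      exact div_le_div_of_nonneg_left (Nat.cast_nonneg _) hden hkkR
    exact le_of_lt (lt_of_lt_of_le (hK kk hkkK) (h1.trans h2))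
  have hfin : b ≤ polyaInner A θ := by
    rw [polyaInner_eq]
    exact Filter.le_liminf_of_le (vcob_ge A hθ0 hθ1) hev2
  exact absurd hb1 (not_lt.2 hfin)

end PolyaAux

namespace PolyaAux

noncomputable def chain (θ : ℝ) (n : ℕ) : ℕ → ℕ
  | 0 => n
  | t + 1 => ⌈θ * chain θ n t⌉₊ - 1

lemma chain_succ_le {θ : ℝ} (hθ1 : θ ≤ 1) (n t : ℕ) : chain θ n (t + 1) ≤ chain θ n t := by
  have := ceil_le_self hθ1 (chain θ n t)
  show ⌈θ * (chain θ n t : ℝ)⌉₊ - 1 ≤ chain θ n t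
  omega

lemma chain_le {θ : ℝ} (hθ1 : θ ≤ 1) (n : ℕ) : ∀ t, chain θ n t ≤ n
  | 0 => le_refl n
  | (t+1) => (chain_succ_le hθ1 n t).trans (chain_le hθ1 n t)

lemma chain_cast_le {θ : ℝ} (hθ0 : 0 ≤ θ) (n : ℕ) :
    ∀ t, (chain θ n t : ℝ) ≤ θ ^ t * n := by
  intro t
  induction t with
  | zero => simp [chain]
  | succ t ih =>
    have hnn : 0 ≤ θ * (chain θ n t : ℝ) := mul_nonneg hθ0 (Nat.cast_nonneg _)
    have h1 : ((⌈θ * (chain θ n t : ℝ)⌉₊ - 1 : ℕ) : ℝ) ≤ θ * (chain θ n t : ℝ) := by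
      rcases Nat.eq_zero_or_pos ⌈θ * (chain θ n t : ℝ)⌉₊ with h0 | hpos
      · simp [h0]; exact hnn
      · rw [Nat.cast_sub hpos]
        have := Nat.ceil_lt_add_one hnn
        push_cast
        linarith
    have h2 : θ * (chain θ n t : ℝ) ≤ θ * (θ ^ t * n) := mul_le_mul_of_nonneg_left ih hθ0
    calc ((chain θ n (t+1) : ℕ) : ℝ) = ((⌈θ * (chain θ n t : ℝ)⌉₊ - 1 : ℕ) : ℝ) := rfl
      _ ≤ θ * (chain θ n t : ℝ) := h1
      _ ≤ θ * (θ ^ t * n) := h2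
      _ = θ ^ (t+1) * n := by ring

lemma v_eq_P (A : Set ℕ) {θ : ℝ} (hθ0 : 0 < θ) {s : ℕ} (hs1 : 1 ≤ s) :
    v A θ s = P A (⌈θ * (s:ℝ)⌉₊ - 1) s / ((1 - θ) * s) := by
  unfold v P
  rw [window_eq A hθ0 hs1]

lemma chain_count (A : Set ℕ) {θ : ℝ} (hθ0 : 0 < θ) (hθ1 : θ < 1) {B : ℝ} (hB0 : 0 ≤ B)
    {N : ℕ} (hN1 : 1 ≤ N) (n : ℕ)
    (hwin : ∀ s : ℕ, N ≤ s → B * ((1 - θ) * s) < P A (⌈θ * (s:ℝ)⌉₊ - 1) s) :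
    ∀ t, N ≤ chain θ n t → B * ((n:ℝ) - chain θ n t - t) ≤ P A (chain θ n t) n := by
  intro t
  induction t with
  | zero =>
    intro _
    have h0 : chain θ n 0 = n := rfl
    rw [h0]
    have h1 : B * ((n:ℝ) - (n:ℝ) - ((0:ℕ):ℝ)) = 0 := by push_cast; ring
    rw [h1]
    exact P_nonneg A _ _
  | succ t ih =>
    intro hge
    have hstep : chain θ n (t+1) ≤ chain θ n t := chain_succ_le hθ1.le n t
    have hsN : N ≤ chain θ n t := le_trans hge hstep
    have hs1 : 1 ≤ chain θ n t := le_trans hN1 hsN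
    have hsn : chain θ n t ≤ n := chain_le hθ1.le n t
    have hceil1 : 1 ≤ ⌈θ * ((chain θ n t : ℕ):ℝ)⌉₊ := Nat.ceil_pos.2 (by positivity)
    have hnext : chain θ n (t+1) = ⌈θ * ((chain θ n t : ℕ):ℝ)⌉₊ - 1 := rfl
    have hw := hwin (chain θ n t) hsN
    rw [← hnext] at hw
    have hPsplit : P A (chain θ n (t+1)) n
        = P A (chain θ n (t+1)) (chain θ n t) + P A (chain θ n t) n := P_add A hstep hsn
    have hih := ih hsN
    have hc1 : ((chain θ n (t+1) : ℕ) : ℝ) = (⌈θ * ((chain θ n t : ℕ):ℝ)⌉₊ : ℝ) - 1 := by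
      rw [hnext, Nat.cast_sub hceil1, Nat.cast_one]
    have hc2 : θ * ((chain θ n t : ℕ):ℝ) ≤ (⌈θ * ((chain θ n t : ℕ):ℝ)⌉₊ : ℝ) := Nat.le_ceil _
    have key1 : B * (((chain θ n t : ℕ):ℝ) - ((chain θ n (t+1) : ℕ):ℝ) - 1)
        ≤ B * ((1 - θ) * (chain θ n t : ℕ)) := by
      apply mul_le_mul_of_nonneg_left _ hB0
      rw [hc1]
      linarith
    have expand : B * ((n:ℝ) - ((chain θ n (t+1) : ℕ):ℝ) - ((t+1 : ℕ):ℝ))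
        = B * (((chain θ n t : ℕ):ℝ) - ((chain θ n (t+1) : ℕ):ℝ) - 1)
          + B * ((n:ℝ) - ((chain θ n t : ℕ):ℝ) - ((t : ℕ):ℝ)) := by
      push_cast
      ring
    rw [expand, hPsplit]
    have := key1.trans hw.le
    linarith

lemma chain_terminates {θ : ℝ} (hθ0 : 0 < θ) (hθ1 : θ < 1) {N M : ℕ}
    (hN2 : (2:ℝ) ≤ (1 - θ) * N) (hNM : N ≤ M) (hM1 : 1 ≤ M) (n : ℕ) :
    ∃ t, chain θ n t < M := by
  by_contra hno
  push_neg at hno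
  have hdec : ∀ t, chain θ n t + t ≤ n := by
    intro t
    induction t with
    | zero => simp [chain]
    | succ t ih =>
      have hs : M ≤ chain θ n t := hno t
      have hsN : N ≤ chain θ n t := le_trans hNM hs
      have hsNR : (N:ℝ) ≤ ((chain θ n t : ℕ):ℝ) := by exact_mod_cast hsN
      have h2N : 2 ≤ (1 - θ) * ((chain θ n t : ℕ):ℝ) := by nlinarith
      have hcl : (⌈θ * ((chain θ n t : ℕ):ℝ)⌉₊:ℝ) < θ * ((chain θ n t : ℕ):ℝ) + 1 :=
        Nat.ceil_lt_add_one (by positivity)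
      have hlt : (⌈θ * ((chain θ n t : ℕ):ℝ)⌉₊:ℝ) < ((chain θ n t : ℕ):ℝ) := by linarith
      have hltn : ⌈θ * ((chain θ n t : ℕ):ℝ)⌉₊ < chain θ n t := by exact_mod_cast hlt
      have hstep : chain θ n (t+1) < chain θ n t := by
        have hnext : chain θ n (t+1) = ⌈θ * ((chain θ n t : ℕ):ℝ)⌉₊ - 1 := rfl
        omega
      omega
  have h1 := hdec (n+1)
  have h2 := hno (n+1)
  omega

lemma chain_first_drop {θ : ℝ} {n M : ℕ} (hM : M ≤ n) (hex : ∃ t, chain θ n t < M) :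
    ∃ t₀, M ≤ chain θ n t₀ ∧ chain θ n (t₀ + 1) < M := by
  classical
  have hTspec := Nat.find_spec hex
  have hT0 : Nat.find hex ≠ 0 := by
    intro h0
    rw [h0] at hTspec
    have : chain θ n 0 = n := rfl
    omega
  refine ⟨Nat.find hex - 1, not_lt.1 (Nat.find_min hex (by omega)), ?_⟩
  have : Nat.find hex - 1 + 1 = Nat.find hex := by omega
  rw [this]
  exact hTspec


lemma arith_U1 {θ ε kR mR s₀R cR : ℝ} (hθh : 1/2 ≤ θ) (hθ1 : θ < 1)
    (htop : θ * s₀R ≤ mR) (hmc : mR ≤ cR * kR) (hsmall : cR * (1 - θ) ≤ ε / 32)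
    (hs0 : 0 ≤ s₀R) (hk0 : 0 ≤ kR) (hε : 0 < ε) : s₀R - mR ≤ ε * kR / 8 := by
  have h1 : s₀R ≤ 2 * mR := by nlinarith
  have h2 : s₀R - mR ≤ (1 - θ) * s₀R := by nlinarith
  have h3 : (1 - θ) * s₀R ≤ (1 - θ) * (2 * mR) := by nlinarith
  nlinarith

lemma arith_U2 {θ ε kR mR s₀R NR : ℝ} (hθh : 1/2 ≤ θ)
    (htop : θ * s₀R ≤ NR) (hkε : 32 * NR + 8 ≤ kR * ε)
    (hm0 : 0 ≤ mR) (hN0 : 0 ≤ NR) (hε : 0 < ε) : s₀R - mR ≤ ε * kR / 8 := by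
  have h1 : s₀R ≤ 2 * NR := by nlinarith
  nlinarith

lemma arith_t0 {θ ε kR cR NR nR : ℝ} {t₀ : ℕ}
    (hθ0 : 0 < θ) (hθ1 : θ < 1) (hpow : NR ≤ θ ^ t₀ * nR)
    (hNbig : 32 * (cR + 1) ≤ NR * (ε * (1 - θ)))
    (hn : nR ≤ (cR + 1) * kR) (hε : 0 < ε) (hc0 : 0 ≤ cR) (hN0 : 0 ≤ NR) :
    (t₀ : ℝ) ≤ ε * kR / 8 := by
  have hθpow : (0:ℝ) < θ ^ t₀ := pow_pos hθ0 t₀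
  have hfrac0 : (0:ℝ) ≤ (1 - θ)/θ := div_nonneg (by linarith) hθ0.le
  have hber : 1 + (t₀:ℝ) * ((1 - θ)/θ) ≤ (1 + (1 - θ)/θ) ^ t₀ :=
    one_add_mul_le_pow (by linarith : (-2:ℝ) ≤ (1 - θ)/θ) t₀
  have hid : 1 + (1 - θ)/θ = 1/θ := by field_simp; ring
  rw [hid, div_pow, one_pow] at hber
  have h1 : NR * (1 + (t₀:ℝ) * ((1 - θ)/θ)) ≤ NR * (1 / θ ^ t₀) :=
    mul_le_mul_of_nonneg_left hber hN0
  have h2 : NR * (1 / θ ^ t₀) ≤ nR := by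
    rw [mul_one_div, div_le_iff₀ hθpow]
    nlinarith
  have ht0 : (0:ℝ) ≤ (t₀:ℝ) := Nat.cast_nonneg _
  have h3 : NR * ((t₀:ℝ) * ((1 - θ)/θ)) ≤ nR := by nlinarith
  have h4 : (t₀:ℝ) * ((1 - θ) * NR) ≤ nR * θ := by
    rw [div_eq_mul_inv] at h3
    have hθinv : (0:ℝ) < θ⁻¹ := by positivity
    have := mul_le_mul_of_nonneg_right h3 hθ0.le
    calc (t₀:ℝ) * ((1 - θ) * NR) = NR * ((t₀:ℝ) * ((1 - θ) * θ⁻¹)) * θ := by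
          field_simp
      _ ≤ nR * θ := by nlinarith
  have h5 : (t₀:ℝ) * ((1 - θ) * NR) ≤ (cR + 1) * kR := by nlinarith
  -- (1-θ) NR ≥ 32 (cR+1)/ε  and so t₀ ≤ ε kR/32
  have h6 : (0:ℝ) ≤ (t₀:ℝ) * ((1 - θ) * NR) :=
    mul_nonneg ht0 (mul_nonneg (by linarith) hN0)
  have hk0 : 0 ≤ kR := by
    by_contra hneg
    push_neg at hneg
    nlinarith
  nlinarith [mul_le_mul_of_nonneg_right h5 hε.le]

lemma arith_final {G ε kR s₀R t₀R mR nR cntR : ℝ}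
    (hG0 : 0 ≤ G) (hG1 : G ≤ 1) (hε : 0 < ε) (hε1 : ε ≤ 1)
    (hone : 1 ≤ ε * kR / 8) (hk0 : 0 < kR)
    (hU : s₀R - mR ≤ ε * kR / 8) (ht : t₀R ≤ ε * kR / 8) (hnR : nR = mR + kR - 1)
    (hmain : (G + ε) * (nR - s₀R - t₀R) ≤ cntR) (hcnt : cntR < (G + ε/4) * kR) : False := by
  have hB0 : (0:ℝ) ≤ G + ε := by linarith
  have hlow : kR * (1 - 3 * ε / 8) ≤ nR - s₀R - t₀R := by
    rw [hnR]; linarith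
  have h1 : (G + ε) * (kR * (1 - 3 * ε / 8)) ≤ (G + ε) * (nR - s₀R - t₀R) :=
    mul_le_mul_of_nonneg_left hlow hB0
  have h2 : (0:ℝ) ≤ (3 * ε / 8) * ((2 - G - ε) * kR) :=
    mul_nonneg (by linarith) (mul_nonneg (by linarith) hk0.le)
  nlinarith

set_option maxHeartbeats 1000000 in
lemma polya_le (A : Set ℕ) {c : ℕ} (hc : 1 ≤ c) {ε : ℝ} (hε : 0 < ε) (hε1 : ε ≤ 1)
    {θ : ℝ} (hθh : 1/2 ≤ θ) (hθ1 : θ < 1) (hsmall : (c : ℝ) * (1 - θ) ≤ ε / 32) :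
    polyaInner A θ ≤ g A c + ε := by
  have hθ0 : (0:ℝ) < θ := by linarith
  have h1θ : (0:ℝ) < 1 - θ := by linarith
  rw [polyaInner_eq]
  set B := g A c + ε with hB
  have hg0 : 0 ≤ g A c := g_nonneg A hc
  have hg1 : g A c ≤ 1 := g_le_one A hc
  have hB2 : B ≤ 2 := by rw [hB]; linarith
  have hBpos : 0 < B := by rw [hB]; linarith
  apply Filter.liminf_le_of_frequently_le ?_
    (Filter.isBoundedUnder_of ⟨0, fun n => v_nonneg A hθ1.le n⟩)
  by_contra hfr
  rw [Filter.not_frequently] at hfr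
  obtain ⟨N₀, hN₀⟩ := Filter.eventually_atTop.1 hfr
  -- choose the cut-off N
  set N : ℕ := max N₀ (max 1 ⌈32 * ((c:ℝ) + 1) / (ε * (1 - θ))⌉₊) with hNdef
  have hNN₀ : N₀ ≤ N := le_max_left _ _
  have hN1 : 1 ≤ N := le_trans (le_max_left _ _) (le_max_right _ _)
  have hNval : 32 * ((c:ℝ) + 1) / (ε * (1 - θ)) ≤ (N : ℝ) := by
    have h1 : ⌈32 * ((c:ℝ) + 1) / (ε * (1 - θ))⌉₊ ≤ N :=
      le_trans (le_max_right _ _) (le_max_right _ _)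
    exact (Nat.le_ceil _).trans (by exact_mod_cast h1)
  have hNbig : 32 * ((c:ℝ) + 1) ≤ (N : ℝ) * (ε * (1 - θ)) := by
    rw [div_le_iff₀ (by positivity)] at hNval
    linarith
  have hN2 : 2 ≤ (1 - θ) * (N : ℝ) := by nlinarith
  -- choose the cut-off K for the window length
  set K : ℕ := max N (max ⌈(32 * (N:ℝ) + 8) / ε⌉₊ 1) with hKdef
  have hKN : N ≤ K := le_max_left _ _
  have hKval : 32 * (N:ℝ) + 8 ≤ (K : ℝ) * ε := by
    have h1 : ⌈(32 * (N:ℝ) + 8) / ε⌉₊ ≤ K := le_trans (le_max_left _ _) (le_max_right _ _)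
    have h2 : (32 * (N:ℝ) + 8) / ε ≤ (K : ℝ) := (Nat.le_ceil _).trans (by exact_mod_cast h1)
    rw [div_le_iff₀ hε] at h2
    linarith
  -- pick a long bad window
  have hliminf : Filter.atTop.liminf (h A c) = g A c := rfl
  have hfreq : ∃ᶠ k in Filter.atTop, h A c k < g A c + ε/4 :=
    Filter.frequently_lt_of_liminf_lt (hcob_ge A hc) (by rw [hliminf]; linarith)
  obtain ⟨k, hk_lt, hkK⟩ := (hfreq.and_eventually (Filter.eventually_ge_atTop K)).exists
  have hk1 : 1 ≤ k := le_trans (le_trans (le_max_right _ _) (le_max_right (N) _)) hkK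
  have hk0 : (0:ℝ) < k := by exact_mod_cast hk1
  obtain ⟨x, hxS, hxlt⟩ := exists_lt_of_csInf_lt (S_nonempty A hc hk1) hk_lt
  obtain ⟨m, hm1, hmck, rfl⟩ := (mem_S_iff A c k x).1 hxS
  have hcnt : (cnt A m k : ℝ) < (g A c + ε/4) * k := (div_lt_iff₀ hk0).1 hxlt
  have hkε : 32 * (N:ℝ) + 8 ≤ (k:ℝ) * ε := by
    have : (K:ℝ) ≤ k := by exact_mod_cast hkK
    nlinarith
  -- the window is [m, n] with n := m + k - 1
  set n := m + k - 1 with hndef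
  have hn1 : n + 1 = m + k := by omega
  have hnm : m ≤ n := by omega
  have hnk : k ≤ n := by omega
  have hnR : (n:ℝ) = (m:ℝ) + k - 1 := by
    have : ((n:ℕ):ℝ) + 1 = ((m + k : ℕ) : ℝ) := by exact_mod_cast congrArg (Nat.cast (R := ℝ)) hn1
    push_cast at this
    linarith
  have hnck : (n:ℝ) ≤ ((c:ℝ) + 1) * k := by
    have h1 : (m:ℝ) ≤ (c:ℝ) * k := by exact_mod_cast hmck
    rw [hnR]; nlinarith
  have hnN : N ≤ n := le_trans (hKN.trans hkK) hnk
  set M := max m N with hMdef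
  have hMn : M ≤ n := max_le hnm hnN
  -- the count of windows at every scale `s ≥ N`
  have hwin : ∀ s : ℕ, N ≤ s → B * ((1 - θ) * s) < P A (⌈θ * (s:ℝ)⌉₊ - 1) s := by
    intro s hsN
    have hs1 : 1 ≤ s := le_trans hN1 hsN
    have hvs : B < v A θ s := not_le.1 (hN₀ s (le_trans hNN₀ hsN))
    have hden : 0 < (1 - θ) * (s:ℝ) := by
      have : (1:ℝ) ≤ s := by exact_mod_cast hs1
      nlinarith
    rw [v_eq_P A hθ0 hs1, lt_div_iff₀ hden] at hvs
    linarith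
  have hmain := chain_count A hθ0 hθ1 hBpos.le hN1 n hwin
  -- termination of the chain
  have hM1 : 1 ≤ M := le_trans hN1 (le_max_right m N)
  have hex : ∃ t, chain θ n t < M :=
    chain_terminates hθ0 hθ1 hN2 (le_max_right m N) hM1 n
  obtain ⟨t₀, hs₀M, hdrop⟩ := chain_first_drop hMn hex
  set s₀ := chain θ n t₀ with hs₀def
  have hs₀N : N ≤ s₀ := le_trans (le_max_right m N) hs₀M
  have hs₀n : s₀ ≤ n := chain_le hθ1.le n t₀
  have hs₀1 : 1 ≤ s₀ := le_trans hN1 hs₀N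
  -- the main inequality at t₀
  have hP := hmain t₀ hs₀N
  -- P A s₀ n ≤ cnt A m k
  have hPle : P A s₀ n ≤ (cnt A m k : ℝ) := by
    rw [cnt_eq_P A k hm1]
    have : m - 1 + k = n := by omega
    rw [this]
    exact P_mono_left A (by omega : m - 1 ≤ s₀)
  -- bound on s₀ from above
  have hceilT : ⌈θ * (s₀:ℝ)⌉₊ ≤ M := by
    have h1 : chain θ n (t₀ + 1) = ⌈θ * (s₀:ℝ)⌉₊ - 1 := rfl
    have h2 : 1 ≤ ⌈θ * (s₀:ℝ)⌉₊ := Nat.ceil_pos.2 (by positivity)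
    omega
  have hs₀top : θ * (s₀:ℝ) ≤ (M:ℝ) := Nat.ceil_le.1 hceilT
  clear hfr hN₀ hwin hmain hfreq hliminf hk_lt
  have hs₀0 : (0:ℝ) ≤ (s₀:ℝ) := Nat.cast_nonneg _
  have hU : (s₀:ℝ) - (m:ℝ) ≤ ε * k / 8 := by
    rcases le_or_gt N m with hNm | hmN
    · rw [hMdef, max_eq_left hNm] at hs₀top
      exact arith_U1 hθh hθ1 hs₀top (by exact_mod_cast hmck) hsmall hs₀0 hk0.le hε
    · rw [hMdef, max_eq_right hmN.le] at hs₀top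
      exact arith_U2 hθh hs₀top hkε (Nat.cast_nonneg _) (Nat.cast_nonneg _) hε
  have ht₀b : (t₀:ℝ) ≤ ε * k / 8 := by
    have hpow : (s₀:ℝ) ≤ θ ^ t₀ * n := chain_cast_le hθ0.le n t₀
    have hNpow : (N:ℝ) ≤ θ ^ t₀ * n := le_trans (by exact_mod_cast hs₀N) hpow
    exact arith_t0 hθ0 hθ1 hNpow hNbig hnck hε (Nat.cast_nonneg _) (Nat.cast_nonneg _)
  have hone : 1 ≤ ε * k / 8 := by
    have hN0 : (0:ℝ) ≤ (N:ℝ) := Nat.cast_nonneg _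
    linarith
  rw [hB] at hP
  exact arith_final hg0 hg1 hε hε1 hone hk0 hU ht₀b hnR (hP.trans hPle) hcnt

end PolyaAux


open PolyaAux in
/-- As `c → ∞`, the lower `f`-window densities for `f(k) = c·k` converge to the
lower Pólya density `d̲_P(A) = lim_{θ→1⁻} liminf_n |A ∩ [θn,n]|/((1-θ)n)`. -/
theorem tendsto_windowDensity_linear_polya (A : Set ℕ) :
    ∃ L : ℝ, Filter.Tendsto (polyaInner A) (nhdsWithin 1 (Set.Iio 1)) (nhds L) ∧
      Filter.Tendsto (fun c : ℕ => windowDensity (fun k => ((c * k : ℕ) : ℕ∞)) A)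
        Filter.atTop (nhds L) := by
  have hganti : Antitone (fun c : ℕ => g A (c + 1)) := fun a b hab =>
    g_anti A (Nat.le_add_left 1 a) (by omega)
  have hbdd : BddBelow (Set.range fun c : ℕ => g A (c + 1)) := by
    refine ⟨0, ?_⟩
    rintro x ⟨c, rfl⟩
    exact g_nonneg A (by omega)
  set L := ⨅ c : ℕ, g A (c + 1) with hL
  have htend1 : Filter.Tendsto (fun c : ℕ => g A (c + 1)) Filter.atTop (nhds L) :=
    tendsto_atTop_ciInf hganti hbdd
  have htend : Filter.Tendsto (g A) Filter.atTop (nhds L) :=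
    (Filter.tendsto_add_atTop_iff_nat 1).1 htend1
  have hwd : (fun c : ℕ => windowDensity (fun k => ((c * k : ℕ) : ℕ∞)) A) = g A :=
    funext fun c => windowDensity_eq A c
  refine ⟨L, ?_, by rw [hwd]; exact htend⟩
  have hLle : ∀ c : ℕ, 1 ≤ c → L ≤ g A c := by
    intro c hc
    have h1 := ciInf_le hbdd (c - 1)
    rwa [Nat.sub_add_cancel hc] at h1
  rw [Metric.tendsto_nhds]
  intro ε hε
  set ε₁ := min ε 1 / 2 with hε₁
  have hmin : 0 < min ε 1 := lt_min hε one_pos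
  have hmin1 : min ε 1 ≤ 1 := min_le_right _ _
  have hminε : min ε 1 ≤ ε := min_le_left _ _
  have hε₁0 : 0 < ε₁ := by rw [hε₁]; linarith
  have hε₁1 : ε₁ ≤ 1 := by rw [hε₁]; linarith
  obtain ⟨c₀', hc₀'⟩ := exists_lt_of_ciInf_lt (show (⨅ c : ℕ, g A (c + 1)) < L + ε₁ by
    rw [← hL]; linarith)
  set c₀ := c₀' + 1 with hc₀def
  have hc₀1 : 1 ≤ c₀ := by omega
  have hgc₀ : g A c₀ < L + ε₁ := hc₀'
  have hc₀0 : (0:ℝ) < (c₀:ℝ) + 1 := by positivity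
  set θ₀ := max (1/2 : ℝ) (1 - ε₁ / (32 * ((c₀:ℝ) + 1))) with hθ₀
  have hθ₀1 : θ₀ < 1 := by
    apply max_lt (by norm_num)
    have : 0 < ε₁ / (32 * ((c₀:ℝ) + 1)) := by positivity
    linarith
  filter_upwards [Ioo_mem_nhdsLT hθ₀1] with θ hθ
  have hθh : 1/2 ≤ θ := le_trans (le_max_left _ _) hθ.1.le
  have hθ1 : θ < 1 := hθ.2
  have h1θ : (0:ℝ) < 1 - θ := by linarith
  -- lower bound via polya_ge
  set c₁ := ⌈(2:ℝ)/(1-θ)⌉₊ + 1 with hc₁def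
  have hc₁1 : 1 ≤ c₁ := by omega
  have hc₁θ : 2 ≤ (c₁:ℝ) * (1 - θ) := by
    have h1 : (2:ℝ)/(1-θ) ≤ (⌈(2:ℝ)/(1-θ)⌉₊ : ℝ) := Nat.le_ceil _
    have h2 : (2:ℝ)/(1-θ) ≤ (c₁:ℝ) := by
      rw [hc₁def]; push_cast; linarith
    rw [div_le_iff₀ h1θ] at h2
    nlinarith
  have hlow : L ≤ polyaInner A θ :=
    le_trans (hLle c₁ hc₁1) (polya_ge A hθh hθ1 hc₁1 hc₁θ)
  -- upper bound via polya_le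
  have hsmall : (c₀:ℝ) * (1 - θ) ≤ ε₁ / 32 := by
    have h1 : 1 - ε₁ / (32 * ((c₀:ℝ) + 1)) ≤ θ₀ := le_max_right _ _
    have h2 : 1 - θ ≤ ε₁ / (32 * ((c₀:ℝ) + 1)) := by
      have := hθ.1
      linarith
    have h3 : (c₀:ℝ) * (1 - θ) ≤ (c₀:ℝ) * (ε₁ / (32 * ((c₀:ℝ) + 1))) :=
      mul_le_mul_of_nonneg_left h2 (Nat.cast_nonneg _)
    have h4 : (c₀:ℝ) * (ε₁ / (32 * ((c₀:ℝ) + 1))) ≤ ε₁ / 32 := by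
      rw [← mul_div_assoc, div_le_div_iff₀ (by positivity) (by norm_num)]
      nlinarith [Nat.cast_nonneg (α := ℝ) c₀, hε₁0.le]
    linarith
  have hup : polyaInner A θ ≤ g A c₀ + ε₁ :=
    polya_le A hc₀1 hε₁0 hε₁1 hθh hθ1 hsmall
  rw [Real.dist_eq, abs_lt]
  constructor
  · linarith
  · have : 2 * ε₁ ≤ ε := by rw [hε₁]; linarith
    linarith
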